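/- A real Banach space X is compactly locally uniformly rotund (CLUR) if and only if for every x ∈ X \ {0}, every maximizing sequence (y_n) in S_X for x (i.e., ‖x−y_n‖ → 1+‖x‖) has a convergent subsequence. -/

import Mathlib

open Filter Topology

theorem stmt15 {X : Type*} [NormedAddCommGroup X] [NormedSpace ℝ X] [CompleteSpace X] :
    (∀ (x : X) (xn : ℕ → X), ‖x‖ = 1 → (∀ n, ‖xn n‖ = 1) →
        Tendsto (fun n => ‖(1 / 2 : ℝ) • (xn n + x)‖) atTop (𝓝 1) →
        ∃ φ : ℕ → ℕ, StrictMono φ ∧ ∃ l, Tendsto (xn ∘ φ) atTop (𝓝 l)) ↔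
      ∀ (x : X), x ≠ 0 → ∀ yn : ℕ → X, (∀ n, ‖yn n‖ = 1) →
        Tendsto (fun n => ‖x - yn n‖) atTop (𝓝 (1 + ‖x‖)) →
        ∃ φ : ℕ → ℕ, StrictMono φ ∧ ∃ l, Tendsto (yn ∘ φ) atTop (𝓝 l) := by
  constructor
  · intro h x hx yn hyn hmax
    set c := ‖x‖ with hc
    have hc0 : 0 < c := norm_pos_iff.mpr hx
    set u := c⁻¹ • x with hu
    have hun : ‖u‖ = 1 := by
      rw [hu, norm_smul, norm_inv, norm_norm]
      field_simp
    have hxcu : x = c • u := by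
      rw [hu, smul_smul]
      rw [mul_inv_cancel₀ hc0.ne', one_smul]
    have hub : ∀ n, ‖u - yn n‖ ≤ 2 := by
      intro n
      calc ‖u - yn n‖ ≤ ‖u‖ + ‖yn n‖ := norm_sub_le _ _
        _ = 2 := by rw [hun, hyn n]; norm_num
    have key : Tendsto (fun n => ‖u - yn n‖) atTop (𝓝 2) := by
      rcases le_or_gt 1 c with h1 | h1
      · have hlb : ∀ n, ‖x - yn n‖ - (c - 1) ≤ ‖u - yn n‖ := by
          intro n
          have heq : x - yn n = (u - yn n) + (c - 1) • u := by
            rw [hxcu, sub_smul, one_smul]; abel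
          have := norm_add_le (u - yn n) ((c - 1) • u)
          rw [← heq, norm_smul, hun, Real.norm_eq_abs, abs_of_nonneg (by linarith)] at this
          linarith
        have hlt : Tendsto (fun n => ‖x - yn n‖ - (c - 1)) atTop (𝓝 2) := by
          have := hmax.sub_const (c - 1)
          convert this using 2
          ring
        exact tendsto_of_tendsto_of_tendsto_of_le_of_le hlt tendsto_const_nhds hlb hub
      · have hlb : ∀ n, c⁻¹ * (‖x - yn n‖ - (1 - c)) ≤ ‖u - yn n‖ := by
          intro n
          have heq : x - yn n = c • (u - yn n) + (c - 1) • yn n := by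
            rw [hxcu, smul_sub, sub_smul, one_smul]; abel
          have := norm_add_le (c • (u - yn n)) ((c - 1) • yn n)
          rw [← heq, norm_smul, norm_smul, hyn n, Real.norm_eq_abs, Real.norm_eq_abs,
            abs_of_nonneg hc0.le, abs_of_nonpos (by linarith)] at this
          rw [inv_mul_le_iff₀ hc0]
          linarith
        have hlt : Tendsto (fun n => c⁻¹ * (‖x - yn n‖ - (1 - c))) atTop (𝓝 2) := by
          have := (hmax.sub_const (1 - c)).const_mul c⁻¹
          convert this using 2
          field_simp
          ring
        exact tendsto_of_tendsto_of_tendsto_of_le_of_le hlt tendsto_const_nhds hlb hub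
    have hneg : ∀ n, ‖(fun n => -(yn n)) n‖ = 1 := fun n => by simp [hyn n]
    have htend : Tendsto (fun n => ‖(1 / 2 : ℝ) • ((fun n => -(yn n)) n + u)‖) atTop (𝓝 1) := by
      have : Tendsto (fun n => (1 / 2 : ℝ) * ‖u - yn n‖) atTop (𝓝 1) := by
        have := key.const_mul ((1 : ℝ) / 2)
        norm_num at this
        exact this
      convert this using 2 with n
      rw [norm_smul]
      simp only [neg_add_eq_sub]
      norm_num
    obtain ⟨φ, hφ, l, hl⟩ := h u (fun n => -(yn n)) hun hneg htend
    refine ⟨φ, hφ, -l, ?_⟩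
    have := hl.neg
    simpa [Function.comp_def] using this
  · intro h x xn hx hxn htend
    have hx0 : x ≠ 0 := by intro h0; rw [h0, norm_zero] at hx; norm_num at hx
    have hyn : ∀ n, ‖(fun n => -(xn n)) n‖ = 1 := fun n => by simp [hxn n]
    have hmax : Tendsto (fun n => ‖x - (fun n => -(xn n)) n‖) atTop (𝓝 (1 + ‖x‖)) := by
      have h2 : Tendsto (fun n => (2 : ℝ) * ‖(1 / 2 : ℝ) • (xn n + x)‖) atTop (𝓝 (2 * 1)) :=
        htend.const_mul 2
      rw [hx]
      convert h2 using 2 with n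
      · rw [sub_neg_eq_add, add_comm, norm_smul, Real.norm_eq_abs]
        rw [abs_of_nonneg (by norm_num : (0:ℝ) ≤ 1/2)]
        ring
      · norm_num
    obtain ⟨φ, hφ, l, hl⟩ := h x hx0 (fun n => -(xn n)) hyn hmax
    refine ⟨φ, hφ, -l, ?_⟩
    have := hl.neg
    simpa [Function.comp_def] using this
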